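/- Dependence atoms are expressible in InqLTL: for all InqLTL formulas φ1, ..., φn, ψ and every team L, the following are equivalent: (1) for all traces w, w' ∈ L, if the single-trace LTL truth values of φ1, ..., φn agree on w and w', then the single-trace LTL truth values of ψ agree on w and w'; (2) L ⊨ [⋀_{i=1}^{n} (¬φi ⊕ ¬¬φi)] → (¬ψ ⊕ ¬¬ψ), where ¬φ := φ → ⊥. -/

import Mathlib

/-- A trace over the set `AP` of atomic propositions. -/
abbrev Trace (AP : Type) := ℕ → Set AP

/-- A team: a set of traces. -/
abbrev Team (AP : Type) := Set (Trace AP)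

/-- The suffix `w≥i` of a trace. -/
def Trace.shift {AP : Type} (w : Trace AP) (i : ℕ) : Trace AP := fun j => w (i + j)

/-- The suffix team `L≥i`. -/
def Team.shift {AP : Type} (L : Team AP) (i : ℕ) : Team AP := (fun w => Trace.shift w i) '' L

/-- InqLTL formulas over `AP`. -/
inductive InqForm (AP : Type) : Type where
  | bot
  | atom (p : AP)
  | or (φ ψ : InqForm AP)
  | and (φ ψ : InqForm AP)
  | imp (φ ψ : InqForm AP)
  | next (φ : InqForm AP)
  | untl (φ ψ : InqForm AP)
  | rel (φ ψ : InqForm AP)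

/-- Team satisfaction for InqLTL. -/
def InqForm.sat {AP : Type} : InqForm AP → Team AP → Prop
  | .bot, L => L = ∅
  | .atom p, L => ∀ w ∈ L, p ∈ w 0
  | .or φ ψ, L => φ.sat L ∨ ψ.sat L
  | .and φ ψ, L => φ.sat L ∧ ψ.sat L
  | .imp φ ψ, L => ∀ L' ⊆ L, φ.sat L' → ψ.sat L'
  | .next φ, L => φ.sat (L.shift 1)
  | .untl φ ψ, L => ∃ i, ψ.sat (L.shift i) ∧ ∀ k < i, φ.sat (L.shift k)
  | .rel φ ψ, L => ∀ i, ψ.sat (L.shift i) ∨ ∃ k < i, φ.sat (L.shift k)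

/-- Standard single-trace LTL satisfaction. -/
def InqForm.ltlSat {AP : Type} : InqForm AP → Trace AP → Prop
  | .bot, _ => False
  | .atom p, w => p ∈ w 0
  | .or φ ψ, w => φ.ltlSat w ∨ ψ.ltlSat w
  | .and φ ψ, w => φ.ltlSat w ∧ ψ.ltlSat w
  | .imp φ ψ, w => φ.ltlSat w → ψ.ltlSat w
  | .next φ, w => φ.ltlSat (w.shift 1)
  | .untl φ ψ, w => ∃ i, ψ.ltlSat (w.shift i) ∧ ∀ k < i, φ.ltlSat (w.shift k)
  | .rel φ ψ, w => ∀ i, ψ.ltlSat (w.shift i) ∨ ∃ k < i, φ.ltlSat (w.shift k)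

/-- Intuitionistic negation `¬φ := φ → ⊥`. -/
def InqForm.neg {AP : Type} (φ : InqForm AP) : InqForm AP := .imp φ .bot

/-- The InqLTL formula `[⋀_{i=1}^{n} (¬φi ⊕ ¬¬φi)] → (¬ψ ⊕ ¬¬ψ)` expressing the
dependence atom `dep(φ1,...,φn,ψ)` (the empty conjunction is the tautology `⊥ → ⊥`). -/
def depForm {AP : Type} (n : ℕ) (φs : Fin n → InqForm AP) (ψ : InqForm AP) : InqForm AP :=
  .imp
    ((List.ofFn φs).foldr
      (fun φ acc => .and (.or φ.neg φ.neg.neg) acc) (InqForm.neg .bot))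
    (.or ψ.neg ψ.neg.neg)

lemma Team.shift_subset {AP : Type} {L L' : Team AP} (h : L' ⊆ L) (i : ℕ) :
    L'.shift i ⊆ L.shift i := Set.image_mono h

lemma InqForm.sat_empty {AP : Type} (φ : InqForm AP) : φ.sat (∅ : Team AP) := by
  induction φ with
  | bot => rfl
  | atom p => intro w hw; exact hw.elim
  | or φ ψ ih1 ih2 => exact Or.inl ih1
  | and φ ψ ih1 ih2 => exact ⟨ih1, ih2⟩
  | imp φ ψ ih1 ih2 =>
      intro L' hL' _
      rw [Set.subset_empty_iff] at hL'; subst hL'; exact ih2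
  | next φ ih => show φ.sat ((∅ : Team AP).shift 1); simpa [Team.shift] using ih
  | untl φ ψ ih1 ih2 =>
      exact ⟨0, by simpa [Team.shift] using ih2, fun k hk => absurd hk (Nat.not_lt_zero k)⟩
  | rel φ ψ ih1 ih2 => intro i; left; simpa [Team.shift] using ih2

lemma InqForm.sat_mono {AP : Type} (φ : InqForm AP) :
    ∀ {L L' : Team AP}, L' ⊆ L → φ.sat L → φ.sat L' := by
  induction φ with
  | bot => intro L L' h hs; rw [hs, Set.subset_empty_iff] at h; exact h
  | atom p => intro L L' h hs w hw; exact hs w (h hw)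
  | or _ _ ih1 ih2 =>
      intro L L' h hs
      exact hs.elim (fun hs => Or.inl (ih1 h hs)) (fun hs => Or.inr (ih2 h hs))
  | and _ _ ih1 ih2 => intro L L' h hs; exact ⟨ih1 h hs.1, ih2 h hs.2⟩
  | imp _ _ _ _ => intro L L' h hs L'' h'' hφ; exact hs L'' (h''.trans h) hφ
  | next _ ih => intro L L' h hs; exact ih (Team.shift_subset h 1) hs
  | untl _ _ ih1 ih2 =>
      rintro L L' h ⟨i, hi, hk⟩
      exact ⟨i, ih2 (Team.shift_subset h i) hi,
        fun k hk' => ih1 (Team.shift_subset h k) (hk k hk')⟩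
  | rel _ _ ih1 ih2 =>
      intro L L' h hs i
      rcases hs i with hi | ⟨k, hk, hφ⟩
      · exact Or.inl (ih2 (Team.shift_subset h i) hi)
      · exact Or.inr ⟨k, hk, ih1 (Team.shift_subset h k) hφ⟩

lemma InqForm.sat_singleton {AP : Type} (φ : InqForm AP) :
    ∀ w : Trace AP, φ.sat {w} ↔ φ.ltlSat w := by
  induction φ with
  | bot => intro w; simp [InqForm.sat, InqForm.ltlSat]
  | atom p => intro w; simp [InqForm.sat, InqForm.ltlSat]
  | or _ _ ih1 ih2 => intro w; simp [InqForm.sat, InqForm.ltlSat, ih1, ih2]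
  | and _ _ ih1 ih2 => intro w; simp [InqForm.sat, InqForm.ltlSat, ih1, ih2]
  | imp φ ψ ih1 ih2 =>
      intro w
      constructor
      · intro h hφ
        exact (ih2 w).1 (h {w} subset_rfl ((ih1 w).2 hφ))
      · intro h L' hL' hφ
        rcases Set.subset_singleton_iff_eq.mp hL' with rfl | rfl
        · exact InqForm.sat_empty ψ
        · exact (ih2 w).2 (h ((ih1 w).1 hφ))
  | next φ ih =>
      intro w
      show φ.sat (({w} : Team AP).shift 1) ↔ _
      simp only [Team.shift, Set.image_singleton]
      exact ih _
  | untl φ ψ ih1 ih2 =>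
      intro w
      simp only [InqForm.sat, InqForm.ltlSat, Team.shift, Set.image_singleton, ih1, ih2]
  | rel φ ψ ih1 ih2 =>
      intro w
      simp only [InqForm.sat, InqForm.ltlSat, Team.shift, Set.image_singleton, ih1, ih2]

lemma InqForm.neg_sat {AP : Type} (φ : InqForm AP) (L : Team AP) :
    φ.neg.sat L ↔ ∀ w ∈ L, ¬ φ.ltlSat w := by
  constructor
  · intro h w hw hltl
    have h0 := h {w} (Set.singleton_subset_iff.mpr hw) ((InqForm.sat_singleton φ w).2 hltl)
    exact absurd h0 (Set.singleton_ne_empty w)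
  · intro h L' hL' hφ
    show L' = ∅
    rcases Set.eq_empty_or_nonempty L' with rfl | ⟨w, hw⟩
    · rfl
    · have := (InqForm.sat_singleton φ w).1
        (InqForm.sat_mono φ (Set.singleton_subset_iff.mpr hw) hφ)
      exact absurd this (h w (hL' hw))

lemma InqForm.negneg_sat {AP : Type} (φ : InqForm AP) (L : Team AP) :
    φ.neg.neg.sat L ↔ ∀ w ∈ L, φ.ltlSat w := by
  rw [InqForm.neg_sat]
  constructor
  · intro h w hw
    have := h w hw
    simp only [InqForm.neg, InqForm.ltlSat] at this
    exact not_not.mp (fun hn => this (fun hφ => absurd hφ hn))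
  · intro h w hw
    show ¬ (φ.ltlSat w → False)
    exact fun hn => hn (h w hw)

lemma foldr_and_sat {AP : Type} (l : List (InqForm AP)) (L : Team AP) :
    (l.foldr (fun φ acc => InqForm.and (.or φ.neg φ.neg.neg) acc)
      (InqForm.neg .bot)).sat L ↔
      ∀ φ ∈ l, (InqForm.or φ.neg φ.neg.neg).sat L := by
  induction l with
  | nil =>
      simp only [List.foldr_nil, List.not_mem_nil, false_implies, implies_true, iff_true]
      rw [show (InqForm.neg (.bot) : InqForm AP) = InqForm.bot.neg from rfl, InqForm.neg_sat]
      intro w _ h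
      exact h
  | cons φ l ih =>
      simp only [List.foldr_cons, List.mem_cons]
      constructor
      · rintro ⟨h1, h2⟩ χ hχ
        rcases hχ with rfl | hχ
        · exact h1
        · exact (ih.1 h2) χ hχ
      · intro h
        exact ⟨h φ (Or.inl rfl), ih.2 (fun χ hχ => h χ (Or.inr hχ))⟩

/-- Dependence atoms are expressible in InqLTL. -/
theorem dep_atom_expressible {AP : Type} [Fintype AP] (n : ℕ)
    (φs : Fin n → InqForm AP) (ψ : InqForm AP) (L : Team AP) :
    (∀ w ∈ L, ∀ w' ∈ L,
        (∀ i : Fin n, ((φs i).ltlSat w ↔ (φs i).ltlSat w')) →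
        (ψ.ltlSat w ↔ ψ.ltlSat w'))
      ↔ (depForm n φs ψ).sat L := by

  constructor
  · intro h
    rw [depForm]
    intro L' hL' hconj
    rw [foldr_and_sat] at hconj
    have hconst : ∀ i : Fin n,
        (∀ w ∈ L', ¬ (φs i).ltlSat w) ∨ (∀ w ∈ L', (φs i).ltlSat w) := by
      intro i
      have hm := hconj (φs i) (by rw [List.mem_ofFn]; exact ⟨i, rfl⟩)
      rcases hm with h1 | h2
      · exact Or.inl ((InqForm.neg_sat _ _).1 h1)
      · exact Or.inr ((InqForm.negneg_sat _ _).1 h2)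
    by_cases hall : ∀ w ∈ L', ψ.ltlSat w
    · exact Or.inr ((InqForm.negneg_sat _ _).2 hall)
    · left
      rw [InqForm.neg_sat]
      push_neg at hall
      obtain ⟨w0, hw0, hnψ⟩ := hall
      intro w hw hψ
      apply hnψ
      have hiff : ∀ i : Fin n, ((φs i).ltlSat w ↔ (φs i).ltlSat w0) := by
        intro i
        rcases hconst i with hc | hc
        · simp [hc w hw, hc w0 hw0]
        · simp [hc w hw, hc w0 hw0]
      exact (h w (hL' hw) w0 (hL' hw0) hiff).1 hψ
  · intro h w hw w' hw' hiff
    rw [depForm] at h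
    have hsub : ({w, w'} : Team AP) ⊆ L := by
      intro x hx
      rcases hx with rfl | hx
      · exact hw
      · rw [Set.mem_singleton_iff] at hx; subst hx; exact hw'
    have hconj : ((List.ofFn φs).foldr
        (fun φ acc => InqForm.and (.or φ.neg φ.neg.neg) acc)
        (InqForm.neg .bot)).sat {w, w'} := by
      rw [foldr_and_sat]
      intro φ hφ
      rw [List.mem_ofFn] at hφ
      obtain ⟨i, rfl⟩ := hφ
      by_cases hc : (φs i).ltlSat w
      · right
        rw [InqForm.negneg_sat]
        intro x hx
        rcases hx with rfl | hx
        · exact hc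
        · rw [Set.mem_singleton_iff] at hx; subst hx; exact (hiff i).1 hc
      · left
        rw [InqForm.neg_sat]
        intro x hx
        rcases hx with rfl | hx
        · exact hc
        · rw [Set.mem_singleton_iff] at hx; subst hx
          exact fun hx' => hc ((hiff i).2 hx')
    have hres := h {w, w'} hsub hconj
    rcases hres with h1 | h2
    · rw [InqForm.neg_sat] at h1
      constructor
      · intro hψ; exact absurd hψ (h1 w (Set.mem_insert _ _))
      · intro hψ; exact absurd hψ (h1 w' (Set.mem_insert_iff.mpr (Or.inr rfl)))
    · rw [InqForm.negneg_sat] at h2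
      simp [h2 w (Set.mem_insert _ _), h2 w' (Set.mem_insert_iff.mpr (Or.inr rfl))]
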